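/- arXiv:1710.08894 — 6 statements merged into one kernel-verified Lean document; each statement's English description precedes it below -/
import Mathlib

section
/- Let K̄ be an (n+1)×(n+1) real symmetric positive semidefinite matrix, a > 0, and H̄ := (K̄ + aI)⁻¹K̄ with entries h̄_{ij} (writing h̄_i for h̄_{ii}). Then for every i ∈ {1,…,n}, B_i := √(1 − h̄_{n+1,n+1}) + h̄_{i,n+1}/√(1 − h̄_{ii}) > 0. -/
open Matrix

lemma posdef_diag_pos {m : Type*} [Fintype m] [DecidableEq m]
    {N : Matrix m m ℝ} (hN : N.PosDef) (i : m) : 0 < N i i := by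
  have hv : (Pi.single i 1 : m → ℝ) ≠ 0 := by
    intro h
    have := congrFun h i
    simp at this
  have := hN.dotProduct_mulVec_pos hv
  simpa [mulVec_single, single_dotProduct] using this

lemma posdef_offdiag_sq_lt {m : Type*} [Fintype m] [DecidableEq m]
    {N : Matrix m m ℝ} (hN : N.PosDef) {i j : m} (hij : i ≠ j) :
    (N i j) ^ 2 < N i i * N j j := by
  have hii : 0 < N i i := posdef_diag_pos hN i
  have hsym : N j i = N i j := by
    have := hN.1.apply i j
    simpa using this
  set t : ℝ := -(N i j) / N i i with ht
  set x : m → ℝ := t • (Pi.single i 1 : m → ℝ) + (Pi.single j 1 : m → ℝ) with hxdef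
  have hx : x ≠ 0 := by
    intro h
    have := congrFun h j
    simp [hxdef, Pi.single_apply, hij, Ne.symm hij] at this
  have hQ := hN.dotProduct_mulVec_pos hx
  have hval : star x ⬝ᵥ N *ᵥ x
      = N i i * t ^ 2 + (N i j + N j i) * t + N j j := by
    rw [hxdef]
    simp [mulVec_add, mulVec_smul, dotProduct_add, dotProduct_smul,
      add_dotProduct, smul_dotProduct, mulVec_single, single_dotProduct,
      dotProduct_single]
    ring
  rw [hval] at hQ
  rw [hsym, ht] at hQ
  have h2 : N i i * (-(N i j) / N i i) ^ 2 + (N i j + N i j) * (-(N i j) / N i i) + N j j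
      = N j j - N i j ^ 2 / N i i := by
    field_simp
    ring
  rw [h2] at hQ
  have := (div_lt_iff₀ hii).mp (by linarith : N i j ^ 2 / N i i < N j j)
  linarith [this]

theorem krrpm_B_pos (n : ℕ) (Kbar : Matrix (Fin (n + 1)) (Fin (n + 1)) ℝ)
    (hK : Kbar.PosSemidef) (a : ℝ) (ha : 0 < a) :
    ∀ i : Fin n,
      Real.sqrt (1 -
          ((Kbar + a • (1 : Matrix (Fin (n + 1)) (Fin (n + 1)) ℝ))⁻¹ * Kbar)
            (Fin.last n) (Fin.last n)) +
        ((Kbar + a • (1 : Matrix (Fin (n + 1)) (Fin (n + 1)) ℝ))⁻¹ * Kbar)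
            i.castSucc (Fin.last n) /
          Real.sqrt (1 -
            ((Kbar + a • (1 : Matrix (Fin (n + 1)) (Fin (n + 1)) ℝ))⁻¹ * Kbar)
              i.castSucc i.castSucc) > 0 := by
  intro i
  set M := Kbar + a • (1 : Matrix (Fin (n + 1)) (Fin (n + 1)) ℝ) with hMdef
  have hone : (a • (1 : Matrix (Fin (n + 1)) (Fin (n + 1)) ℝ)).PosDef := by
    rw [smul_one_eq_diagonal]
    exact Matrix.posDef_diagonal_iff.mpr fun _ => ha
  have hM : M.PosDef := Matrix.PosDef.posSemidef_add hK hone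
  have hN : (M⁻¹).PosDef := hM.inv
  have hH : M⁻¹ * Kbar = 1 - a • M⁻¹ := by
    have hKeq : Kbar = M - a • (1 : Matrix (Fin (n + 1)) (Fin (n + 1)) ℝ) := by
      rw [hMdef]; abel
    rw [hKeq, Matrix.mul_sub, Matrix.mul_smul, Matrix.mul_one,
      Matrix.nonsing_inv_mul _ (isUnit_iff_ne_zero.mpr hM.det_pos.ne')]
  rw [hH]
  have hne : i.castSucc ≠ Fin.last n := (Fin.castSucc_lt_last i).ne
  set p := M⁻¹ i.castSucc i.castSucc with hp
  set q := M⁻¹ (Fin.last n) (Fin.last n) with hq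
  set r := M⁻¹ i.castSucc (Fin.last n) with hr
  have e1 : (1 : ℝ) - (1 - a • M⁻¹) (Fin.last n) (Fin.last n) = a * q := by
    simp [Matrix.sub_apply, Matrix.smul_apply, Matrix.one_apply_eq, hq]
  have e2 : (1 : ℝ) - (1 - a • M⁻¹) i.castSucc i.castSucc = a * p := by
    simp [Matrix.sub_apply, Matrix.smul_apply, Matrix.one_apply_eq, hp]
  have e3 : (1 - a • M⁻¹) i.castSucc (Fin.last n) = -(a * r) := by
    simp [Matrix.sub_apply, Matrix.smul_apply, Matrix.one_apply_ne hne, hr]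
  rw [e1, e2, e3]
  have hpp : 0 < p := posdef_diag_pos hN _
  have hqq : 0 < q := posdef_diag_pos hN _
  have hcs : r ^ 2 < p * q := posdef_offdiag_sq_lt hN hne
  have hsq : 0 < Real.sqrt (a * q) := Real.sqrt_pos.mpr (by positivity)
  have hsp : 0 < Real.sqrt (a * p) := Real.sqrt_pos.mpr (by positivity)
  rcases le_or_gt r 0 with h | h
  · have : 0 ≤ -(a * r) / Real.sqrt (a * p) := by
      apply div_nonneg _ hsp.le
      nlinarith
    linarith
  · have key : a * r < Real.sqrt (a * q) * Real.sqrt (a * p) := by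
      rw [← Real.sqrt_mul (by positivity : (0:ℝ) ≤ a * q)]
      calc a * r = Real.sqrt ((a * r) ^ 2) := (Real.sqrt_sq (by positivity)).symm
        _ < Real.sqrt (a * q * (a * p)) := by
            apply Real.sqrt_lt_sqrt (by positivity)
            nlinarith [mul_lt_mul_of_pos_left hcs (mul_pos ha ha)]
    have hdiv : (a * r) / Real.sqrt (a * p) < Real.sqrt (a * q) :=
      (div_lt_iff₀ hsp).mpr key
    rw [neg_div] at *
    linarith
end

section
/- Let K be an n×n real symmetric positive semidefinite matrix, k ∈ ℝⁿ, κ ∈ ℝ with K̄ = [[K, k],[k', κ]] symmetric positive semidefinite, a > 0, H̄ := (K̄ + aI_{n+1})⁻¹K̄, and d := 1/(κ + a − k'(K+aI)⁻¹k). Then the bottom-right entry of H̄ satisfies 1 − h̄_{n+1,n+1} = ad. -/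
open Matrix

theorem bordered_hat_bottom_right (n : ℕ)
    (K : Matrix (Fin n) (Fin n) ℝ) (k : Fin n → ℝ) (κ : ℝ)
    (Kbar : Matrix (Fin n ⊕ Fin 1) (Fin n ⊕ Fin 1) ℝ)
    (hKbar : Kbar = Matrix.fromBlocks K (Matrix.replicateCol (Fin 1) k) (Matrix.replicateRow (Fin 1) k)
        (Matrix.of fun _ _ => κ))
    (hpsd : Kbar.PosSemidef)
    (a : ℝ) (ha : 0 < a)
    (d : ℝ)
    (hd : d = 1 / (κ + a - k ⬝ᵥ ((K + a • (1 : Matrix (Fin n) (Fin n) ℝ))⁻¹ *ᵥ k))) :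
    1 - ((Kbar + a • (1 : Matrix (Fin n ⊕ Fin 1) (Fin n ⊕ Fin 1) ℝ))⁻¹ * Kbar)
        (Sum.inr 0) (Sum.inr 0) = a * d := by
  -- positive definiteness of a • 1
  have hsm1 : (a • (1 : Matrix (Fin n ⊕ Fin 1) (Fin n ⊕ Fin 1) ℝ)).PosDef := by
    rw [Matrix.smul_one_eq_diagonal]
    exact Matrix.posDef_diagonal_iff.mpr fun _ => ha
  have hsm2 : (a • (1 : Matrix (Fin n) (Fin n) ℝ)).PosDef := by
    rw [Matrix.smul_one_eq_diagonal]
    exact Matrix.posDef_diagonal_iff.mpr fun _ => ha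
  set A : Matrix (Fin n) (Fin n) ℝ := K + a • (1 : Matrix (Fin n) (Fin n) ℝ) with hA
  set M : Matrix (Fin n ⊕ Fin 1) (Fin n ⊕ Fin 1) ℝ :=
    Kbar + a • (1 : Matrix (Fin n ⊕ Fin 1) (Fin n ⊕ Fin 1) ℝ) with hM
  have hMpos : M.PosDef := Matrix.PosDef.posSemidef_add hpsd hsm1
  have hKpsd : K.PosSemidef := by
    have := hpsd.submatrix Sum.inl
    convert this using 1
    subst hKbar
    ext i j
    simp [Matrix.submatrix, Matrix.fromBlocks]
  have hApos : A.PosDef := Matrix.PosDef.posSemidef_add hKpsd hsm2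
  haveI iM : Invertible M := hMpos.isUnit.invertible
  haveI iA : Invertible A := hApos.isUnit.invertible
  -- block decomposition of M
  have hsplit : M = Matrix.fromBlocks A (Matrix.replicateCol (Fin 1) k) (Matrix.replicateRow (Fin 1) k)
      (Matrix.of fun _ _ => κ + a) := by
    subst hKbar
    ext i j
    cases i <;> cases j <;> simp [hM, hA, Matrix.fromBlocks, Matrix.one_apply, Matrix.add_apply, Matrix.smul_apply, eq_iff_true_of_subsingleton]
  haveI iF : Invertible (Matrix.fromBlocks A (Matrix.replicateCol (Fin 1) k) (Matrix.replicateRow (Fin 1) k)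
      (Matrix.of fun _ _ => κ + a)) := hsplit ▸ iM
  haveI iS : Invertible ((Matrix.of fun _ _ => κ + a : Matrix (Fin 1) (Fin 1) ℝ)
      - Matrix.replicateRow (Fin 1) k * ⅟A * Matrix.replicateCol (Fin 1) k) :=
    Matrix.invertibleOfFromBlocks₁₁Invertible A (Matrix.replicateCol (Fin 1) k) (Matrix.replicateRow (Fin 1) k)
      (Matrix.of fun _ _ => κ + a)
  -- the Schur complement entry
  set S : Matrix (Fin 1) (Fin 1) ℝ := (Matrix.of fun _ _ => κ + a : Matrix (Fin 1) (Fin 1) ℝ)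
      - Matrix.replicateRow (Fin 1) k * ⅟A * Matrix.replicateCol (Fin 1) k with hS
  have hS00 : S 0 0 = κ + a - k ⬝ᵥ (A⁻¹ *ᵥ k) := by
    rw [hS]
    simp only [Matrix.sub_apply, Matrix.of_apply, ← invOf_eq_nonsing_inv]
    congr 1
    simp only [Matrix.mul_apply, Matrix.replicateRow_apply, Matrix.replicateCol_apply, Matrix.mulVec,
      dotProduct, Finset.mul_sum, Finset.sum_mul]
    rw [Finset.sum_comm]
    exact Finset.sum_congr rfl fun i _ => Finset.sum_congr rfl fun j _ => by ring
  -- the key entry of M⁻¹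
  have hinvS : (⅟S) 0 0 = d := by
    have h1 : (S * ⅟S) 0 0 = 1 := by rw [mul_invOf_self]; simp [Matrix.one_apply]
    rw [Matrix.mul_apply] at h1
    simp only [Fin.sum_univ_one] at h1
    rw [hd, ← hS00]
    rw [mul_comm] at h1
    exact eq_one_div_of_mul_eq_one_left h1
  have hMinv : M⁻¹ (Sum.inr 0) (Sum.inr 0) = d := by
    rw [← invOf_eq_nonsing_inv]
    have heq : ⅟M = ⅟(Matrix.fromBlocks A (Matrix.replicateCol (Fin 1) k) (Matrix.replicateRow (Fin 1) k)
        (Matrix.of fun _ _ => κ + a)) := by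
      rw [invOf_eq_nonsing_inv, invOf_eq_nonsing_inv, hsplit]
    rw [heq, Matrix.invOf_fromBlocks₁₁_eq, Matrix.fromBlocks_apply₂₂]
    exact hinvS
  -- rewrite the hat matrix
  have hhat : M⁻¹ * Kbar = 1 - a • M⁻¹ := by
    have hK' : Kbar = M - a • (1 : Matrix (Fin n ⊕ Fin 1) (Fin n ⊕ Fin 1) ℝ) := by
      rw [hM]; abel
    rw [hK', Matrix.mul_sub, Matrix.mul_smul, Matrix.mul_one,
      Matrix.nonsing_inv_mul M ((Matrix.isUnit_iff_isUnit_det M).mp hMpos.isUnit)]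
  rw [show ((Kbar + a • (1 : Matrix (Fin n ⊕ Fin 1) (Fin n ⊕ Fin 1) ℝ))⁻¹ * Kbar) = M⁻¹ * Kbar from rfl,
    hhat]
  simp [Matrix.sub_apply, Matrix.one_apply, hMinv]
end

section
/- Let K, k, κ, K̄, a, d be as in the bordered-kernel setting, H := (K+aI)⁻¹K, and H̄ := (K̄+aI_{n+1})⁻¹K̄. Then for each i ∈ {1,…,n}, the i-th diagonal entry of H̄ satisfies 1 − h̄_{ii} = 1 − h_{ii} + a·d·(eᵢ'(K+aI)⁻¹k)², where eᵢ is the i-th standard basis vector of ℝⁿ. -/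
open Matrix

lemma smul_one_posDef {m : Type*} [Fintype m] [DecidableEq m] {a : ℝ} (ha : 0 < a) :
    (a • (1 : Matrix m m ℝ)).PosDef := by
  rw [smul_one_eq_diagonal]
  exact posDef_diagonal_iff.mpr fun _ => ha

theorem bordered_hat_diag (n : ℕ)
    (K : Matrix (Fin n) (Fin n) ℝ) (k : Fin n → ℝ) (κ : ℝ)
    (Kbar : Matrix (Fin n ⊕ Fin 1) (Fin n ⊕ Fin 1) ℝ)
    (hKbar : Kbar = Matrix.fromBlocks K (Matrix.replicateCol (Fin 1) k) (Matrix.replicateRow (Fin 1) k)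
        (Matrix.of fun _ _ => κ))
    (hpsd : Kbar.PosSemidef)
    (a : ℝ) (ha : 0 < a)
    (d : ℝ)
    (hd : d = 1 / (κ + a - k ⬝ᵥ ((K + a • (1 : Matrix (Fin n) (Fin n) ℝ))⁻¹ *ᵥ k))) :
    ∀ i : Fin n,
      1 - ((Kbar + a • (1 : Matrix (Fin n ⊕ Fin 1) (Fin n ⊕ Fin 1) ℝ))⁻¹ * Kbar)
          (Sum.inl i) (Sum.inl i)
        = 1 - ((K + a • (1 : Matrix (Fin n) (Fin n) ℝ))⁻¹ * K) i i
            + a * d * (((K + a • (1 : Matrix (Fin n) (Fin n) ℝ))⁻¹ *ᵥ k) i) ^ 2 := by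
  intro i
  set A : Matrix (Fin n) (Fin n) ℝ := K + a • 1 with hA
  set M : Matrix (Fin n ⊕ Fin 1) (Fin n ⊕ Fin 1) ℝ := Kbar + a • 1 with hM
  -- K is PSD
  have hKpsd : K.PosSemidef := by
    have := hpsd.submatrix (Sum.inl : Fin n → Fin n ⊕ Fin 1)
    convert this using 1
    ext i j
    simp [hKbar, submatrix, fromBlocks]
  have hApd : A.PosDef := Matrix.PosDef.posSemidef_add hKpsd (smul_one_posDef ha)
  have hMpd : M.PosDef := Matrix.PosDef.posSemidef_add hpsd (smul_one_posDef ha)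
  haveI : Invertible A := hApd.isUnit.invertible
  haveI : Invertible M := hMpd.isUnit.invertible
  -- block structure of M
  have hMblk : M = fromBlocks A (Matrix.replicateCol (Fin 1) k) (Matrix.replicateRow (Fin 1) k)
      (Matrix.of (fun _ _ => κ) + a • (1 : Matrix (Fin 1) (Fin 1) ℝ)) := by
    rw [hM, hKbar]
    ext (i | i) (j | j) <;>
      simp [hA, fromBlocks, Matrix.one_apply, Matrix.smul_apply, Fin.fin_one_eq_zero]
  set B := Matrix.replicateCol (Fin 1) k with hB
  set C := Matrix.replicateRow (Fin 1) k with hC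
  set D1 : Matrix (Fin 1) (Fin 1) ℝ := Matrix.of (fun _ _ => κ) + a • 1 with hD1
  haveI iblk : Invertible (fromBlocks A B C D1) := hMblk ▸ ‹Invertible M›
  haveI isch : Invertible (D1 - C * ⅟A * B) := invertibleOfFromBlocks₁₁Invertible A B C D1
  set s : Matrix (Fin 1) (Fin 1) ℝ := D1 - C * ⅟A * B with hs
  -- inverse of M via block formula
  have hMinv : M⁻¹ = fromBlocks (⅟A + ⅟A * B * ⅟s * C * ⅟A) (-(⅟A * B * ⅟s))
      (-(⅟s * C * ⅟A)) (⅟s) := by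
    rw [hMblk, ← invOf_eq_nonsing_inv, invOf_fromBlocks₁₁_eq]
  have hAinv : (⅟A : Matrix (Fin n) (Fin n) ℝ) = A⁻¹ := invOf_eq_nonsing_inv A
  -- value of the Schur complement
  have hs00 : s 0 0 = κ + a - k ⬝ᵥ (A⁻¹ *ᵥ k) := by
    rw [hs, hD1, hB, hC, hAinv]
    simp [Matrix.sub_apply, Matrix.add_apply, Matrix.smul_apply, Matrix.one_apply,
      Matrix.mul_apply, Matrix.replicateRow_apply, Matrix.replicateCol_apply, dotProduct, mulVec,
      Fin.sum_univ_one, Finset.mul_sum, Finset.sum_mul]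
    rw [Finset.sum_comm]
    simp [mul_assoc]
  have hs00d : (⅟s : Matrix (Fin 1) (Fin 1) ℝ) 0 0 = d := by
    have h1 : (⅟s * s) 0 0 = 1 := by rw [invOf_mul_self]; simp [Matrix.one_apply]
    rw [Matrix.mul_apply, Fin.sum_univ_one] at h1
    have hne : s 0 0 ≠ 0 := by
      intro h0; rw [h0, mul_zero] at h1; exact zero_ne_one h1
    rw [hd, ← hs00]
    exact eq_one_div_of_mul_eq_one_left h1
  -- symmetry of A⁻¹
  have hsymA : A⁻¹ᵀ = A⁻¹ := by
    have := hApd.isHermitian.inv.eq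
    rwa [Matrix.conjTranspose_eq_transpose_of_trivial] at this
  -- the key entry computation
  have hkey : M⁻¹ (Sum.inl i) (Sum.inl i) = A⁻¹ i i + d * ((A⁻¹ *ᵥ k) i) ^ 2 := by
    rw [hMinv]
    simp only [fromBlocks_apply₁₁, Matrix.add_apply, hAinv]
    congr 1
    have : (A⁻¹ * B * ⅟s * C * A⁻¹) i i
        = (A⁻¹ *ᵥ k) i * d * ∑ j, k j * A⁻¹ j i := by
      have hsinv : (s 0 0)⁻¹ = d := by
        rw [hs00, hd]; exact inv_eq_one_div _
      simp [Matrix.mul_apply, Fin.sum_univ_one, hB, hC, hs00d, mulVec, dotProduct,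
        Finset.sum_mul, Finset.mul_sum, hsinv, mul_assoc]
    rw [this]
    have h2 : ∑ j, k j * A⁻¹ j i = (A⁻¹ *ᵥ k) i := by
      conv_rhs => rw [← hsymA]
      simp [mulVec, dotProduct, Matrix.transpose_apply, mul_comm]
    rw [h2]; ring
  -- hat matrix reductions
  have hMdet : IsUnit M.det := hMpd.det_pos.ne'.isUnit
  have hAdet : IsUnit A.det := hApd.det_pos.ne'.isUnit
  have e1 : M⁻¹ * Kbar = 1 - a • M⁻¹ := by
    have hK' : Kbar = M - a • 1 := by rw [hM]; abel
    rw [hK', Matrix.mul_sub, Matrix.nonsing_inv_mul M hMdet, Matrix.mul_smul, Matrix.mul_one]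
  have e2 : A⁻¹ * K = 1 - a • A⁻¹ := by
    have hK' : K = A - a • 1 := by rw [hA]; abel
    rw [hK', Matrix.mul_sub, Matrix.nonsing_inv_mul A hAdet, Matrix.mul_smul, Matrix.mul_one]
  show 1 - (M⁻¹ * Kbar) (Sum.inl i) (Sum.inl i) = 1 - (A⁻¹ * K) i i + a * d * ((A⁻¹ *ᵥ k) i) ^ 2
  rw [e1, e2]
  simp only [Matrix.sub_apply, Matrix.one_apply_eq, Matrix.smul_apply, smul_eq_mul]
  rw [hkey]
  ring
end

section
/- Let K, k, κ, K̄, a, d be as in the bordered-kernel setting, H := (K+aI)⁻¹K and H̄ := (K̄+aI_{n+1})⁻¹K̄. Then H̄ equals the block matrix [[H − ad(K+aI)⁻¹kk'(K+aI)⁻¹, ad(K+aI)⁻¹k],[ad·k'(K+aI)⁻¹, dκ − dk'(K+aI)⁻¹k]]. -/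
open Matrix

private lemma psd_add_smul_one {m : Type*} [Fintype m] [DecidableEq m]
    {M : Matrix m m ℝ} (hM : M.PosSemidef) {a : ℝ} (ha : 0 < a) :
    (M + a • (1 : Matrix m m ℝ)).PosDef := by
  refine Matrix.PosDef.of_dotProduct_mulVec_pos ?_ (fun x hx => ?_)
  · show (M + a • 1)ᴴ = M + a • 1
    simp [conjTranspose_add]; have := hM.1; simpa [Matrix.IsHermitian] using this
  · have h1 : (0:ℝ) ≤ star x ⬝ᵥ M *ᵥ x := hM.dotProduct_mulVec_nonneg x
    have h2 : (0:ℝ) < x ⬝ᵥ x := by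
      rcases Function.ne_iff.mp hx with ⟨i, hi⟩
      refine Finset.sum_pos' (fun j _ => mul_self_nonneg _) ⟨i, Finset.mem_univ i, ?_⟩
      exact mul_self_pos.mpr hi
    calc (0:ℝ) < star x ⬝ᵥ M *ᵥ x + a * (x ⬝ᵥ x) := by
          have : (0:ℝ) < a * (x ⬝ᵥ x) := mul_pos ha h2
          linarith
      _ = star x ⬝ᵥ (M + a • 1) *ᵥ x := by
          simp [Matrix.add_mulVec, dotProduct_add, Matrix.smul_mulVec, star,
            dotProduct_smul, smul_eq_mul]

private lemma of_const_mul {m : Type*} [Fintype m] (x : ℝ) (M : Matrix (Fin 1) m ℝ) :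
    (Matrix.of fun _ _ => x : Matrix (Fin 1) (Fin 1) ℝ) * M = x • M := by
  ext i j
  have hi : i = 0 := Subsingleton.elim i 0
  subst hi
  rw [Matrix.mul_apply]
  simp [Fin.sum_univ_one]

private lemma mul_of_const {m : Type*} [Fintype m] (x : ℝ) (M : Matrix m (Fin 1) ℝ) :
    M * (Matrix.of fun _ _ => x : Matrix (Fin 1) (Fin 1) ℝ) = x • M := by
  ext i j
  have hj : j = 0 := Subsingleton.elim j 0
  subst hj
  rw [Matrix.mul_apply]
  simp [Fin.sum_univ_one, mul_comm]


theorem bordered_hat_block_form (n : ℕ)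
    (K : Matrix (Fin n) (Fin n) ℝ) (k : Fin n → ℝ) (κ : ℝ)
    (Kbar : Matrix (Fin n ⊕ Fin 1) (Fin n ⊕ Fin 1) ℝ)
    (hKbar : Kbar = Matrix.fromBlocks K (Matrix.replicateCol (Fin 1) k) (Matrix.replicateRow (Fin 1) k)
        (Matrix.of fun _ _ => κ))
    (hpsd : Kbar.PosSemidef)
    (a : ℝ) (ha : 0 < a)
    (d : ℝ)
    (hd : d = 1 / (κ + a - k ⬝ᵥ ((K + a • (1 : Matrix (Fin n) (Fin n) ℝ))⁻¹ *ᵥ k))) :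
    (Kbar + a • (1 : Matrix (Fin n ⊕ Fin 1) (Fin n ⊕ Fin 1) ℝ))⁻¹ * Kbar
      = Matrix.fromBlocks
          ((K + a • 1)⁻¹ * K - (a * d) • ((K + a • 1)⁻¹ * Matrix.replicateCol (Fin 1) k *
            Matrix.replicateRow (Fin 1) k * (K + a • 1)⁻¹))
          ((a * d) • ((K + a • 1)⁻¹ * Matrix.replicateCol (Fin 1) k))
          ((a * d) • (Matrix.replicateRow (Fin 1) k * (K + a • 1)⁻¹))
          (Matrix.of fun _ _ =>
            d * κ - d * (k ⬝ᵥ ((K + a • (1 : Matrix (Fin n) (Fin n) ℝ))⁻¹ *ᵥ k))) := by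
  have hK : K.PosSemidef := by
    have h := hpsd.submatrix Sum.inl
    have he : Kbar.submatrix Sum.inl Sum.inl = K := by
      ext i j; simp [hKbar]
    rwa [he] at h
  set A : Matrix (Fin n) (Fin n) ℝ := K + a • 1 with hAdef
  have hA : A.PosDef := psd_add_smul_one hK ha
  haveI : Invertible A := hA.isUnit.invertible
  have hAA : A * A⁻¹ = 1 := Matrix.mul_nonsing_inv A hA.det_pos.ne'.isUnit
  have hAA' : A⁻¹ * A = 1 := Matrix.nonsing_inv_mul A hA.det_pos.ne'.isUnit
  have hbar : (Kbar + a • (1 : Matrix (Fin n ⊕ Fin 1) (Fin n ⊕ Fin 1) ℝ)).PosDef :=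
    psd_add_smul_one hpsd ha
  set s : ℝ := k ⬝ᵥ (A⁻¹ *ᵥ k) with hs
  have hsplit : Kbar + a • (1 : Matrix (Fin n ⊕ Fin 1) (Fin n ⊕ Fin 1) ℝ)
      = Matrix.fromBlocks A (Matrix.replicateCol (Fin 1) k) (Matrix.replicateRow (Fin 1) k)
          (Matrix.of fun _ _ => κ + a) := by
    rw [hKbar, hAdef]
    ext (i | i) (j | j) <;>
      simp [Matrix.add_apply, Matrix.one_apply, Matrix.smul_apply,
        eq_iff_true_of_subsingleton]
  have hrc : Matrix.replicateRow (Fin 1) k * (A⁻¹ * Matrix.replicateCol (Fin 1) k)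
      = (Matrix.of fun _ _ => s : Matrix (Fin 1) (Fin 1) ℝ) := by
    rw [← Matrix.replicateCol_mulVec, Matrix.replicateRow_mul_replicateCol, hs]
  have hschur : κ + a - s ≠ 0 := by
    have hdet := hbar.det_pos.ne'
    rw [hsplit, Matrix.det_fromBlocks₁₁, invOf_eq_nonsing_inv] at hdet
    have hS : ((Matrix.of fun _ _ => κ + a) -
        Matrix.replicateRow (Fin 1) k * A⁻¹ * Matrix.replicateCol (Fin 1) k : Matrix (Fin 1) (Fin 1) ℝ).det
        = κ + a - s := by
      rw [Matrix.det_fin_one]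
      simp [Matrix.sub_apply, Matrix.mul_assoc, hrc]
    rw [hS] at hdet
    exact fun h0 => hdet (by rw [h0, mul_zero])
  have hd1 : d * (κ + a - s) = 1 := by
    rw [hd, one_div, inv_mul_cancel₀ hschur]
  -- the candidate right hand side
  set B : Matrix (Fin n ⊕ Fin 1) (Fin n ⊕ Fin 1) ℝ :=
    Matrix.fromBlocks
      (A⁻¹ * K - (a * d) • (A⁻¹ * Matrix.replicateCol (Fin 1) k * Matrix.replicateRow (Fin 1) k * A⁻¹))
      ((a * d) • (A⁻¹ * Matrix.replicateCol (Fin 1) k))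
      ((a * d) • (Matrix.replicateRow (Fin 1) k * A⁻¹))
      (Matrix.of fun _ _ => d * κ - d * s) with hB
  show (Kbar + a • 1)⁻¹ * Kbar = B
  have key : (Kbar + a • (1 : Matrix (Fin n ⊕ Fin 1) (Fin n ⊕ Fin 1) ℝ)) * B = Kbar := by
    rw [hB, hsplit, hKbar, Matrix.fromBlocks_multiply]
    have cancel : ∀ {p : Type} (X : Matrix (Fin n) p ℝ), A * (A⁻¹ * X) = X := fun X => by
      rw [← Matrix.mul_assoc, hAA, Matrix.one_mul]
    have cancelc : A * (A⁻¹ * Matrix.replicateCol (Fin 1) k) = Matrix.replicateCol (Fin 1) k := by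
      rw [← Matrix.mul_assoc, hAA, Matrix.one_mul]
    rw [Matrix.fromBlocks_inj]
    refine ⟨?_, ?_, ?_, ?_⟩
    · -- top left
      simp only [Matrix.mul_sub, Matrix.mul_smul, Matrix.mul_assoc, cancel]
      abel
    · -- top right
      rw [Matrix.mul_smul, cancelc, mul_of_const, ← add_smul,
        show a * d + (d * κ - d * s) = 1 from by linear_combination hd1, one_smul]
    · -- bottom left
      rw [Matrix.mul_sub, Matrix.mul_smul, of_const_mul,
        show Matrix.replicateRow (Fin 1) k * (A⁻¹ * Matrix.replicateCol (Fin 1) k * Matrix.replicateRow (Fin 1) k * A⁻¹)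
            = s • (Matrix.replicateRow (Fin 1) k * A⁻¹) by
          rw [Matrix.mul_assoc (A⁻¹ * Matrix.replicateCol (Fin 1) k), ← Matrix.mul_assoc,
            hrc, of_const_mul]]
      have h2 : A⁻¹ * A = A⁻¹ * K + a • A⁻¹ := by
        conv_lhs => rw [hAdef]
        rw [Matrix.mul_add, Matrix.mul_smul, Matrix.mul_one]
      have hfin : Matrix.replicateRow (Fin 1) k * (A⁻¹ * K) + a • (Matrix.replicateRow (Fin 1) k * A⁻¹)
          = Matrix.replicateRow (Fin 1) k := by
        calc Matrix.replicateRow (Fin 1) k * (A⁻¹ * K) + a • (Matrix.replicateRow (Fin 1) k * A⁻¹)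
            = Matrix.replicateRow (Fin 1) k * (A⁻¹ * K + a • A⁻¹) := by
              rw [Matrix.mul_add, Matrix.mul_smul]
          _ = Matrix.replicateRow (Fin 1) k * (A⁻¹ * A) := by rw [h2]
          _ = Matrix.replicateRow (Fin 1) k := by rw [hAA', Matrix.mul_one]
      rw [smul_smul, smul_smul,
        show (κ + a) * (a * d) = a + a * d * s from by linear_combination a * hd1,
        add_smul]
      conv_rhs => rw [← hfin]
      module
    · -- bottom right
      rw [Matrix.mul_smul, hrc, of_const_mul]
      ext i j
      simp only [Matrix.add_apply, Matrix.smul_apply, Matrix.of_apply, smul_eq_mul]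
      linear_combination κ * hd1
  calc (Kbar + a • 1)⁻¹ * Kbar
      = (Kbar + a • 1)⁻¹ * ((Kbar + a • (1 : Matrix (Fin n ⊕ Fin 1) (Fin n ⊕ Fin 1) ℝ)) * B) := by
        rw [key]
    _ = B := by
        rw [← Matrix.mul_assoc, Matrix.nonsing_inv_mul _ hbar.det_pos.ne'.isUnit, Matrix.one_mul]
end

section
/- Let u be monotonically increasing functions defining a conformal transducer via conformity scores: suppose for each i ∈ {1,…,n} the map y ↦ α^y_{n+1} − α^y_i is monotonically increasing with limits −∞ at −∞ and +∞ at +∞, and α are continuous. Then the function y ↦ Q(y,τ) defined by Q(y,τ) = (|{i ≤ n+1 : α^y_i < α^y_{n+1}}| + τ|{i ≤ n+1 : α^y_i = α^y_{n+1}}|)/(n+1) is monotonically increasing in y for each fixed τ ∈ [0,1], and Q(y,0) → 0 as y → −∞ and Q(y,1) → 1 as y → +∞. -/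
open Filter

private lemma aux_step (τ a1 b1 a2 b2 : ℝ) (hτ0 : 0 ≤ τ) (hτ1 : τ ≤ 1)
    (h : b1 - a1 ≤ b2 - a2) :
    ((if a1 < b1 then (1:ℝ) else 0) + τ * (if a1 = b1 then (1:ℝ) else 0)) ≤
    ((if a2 < b2 then (1:ℝ) else 0) + τ * (if a2 = b2 then (1:ℝ) else 0)) := by
  rcases lt_trichotomy a1 b1 with h1 | h1 | h1
  · rw [if_pos h1, if_neg (ne_of_lt h1)]
    rcases lt_trichotomy a2 b2 with h2 | h2 | h2
    · rw [if_pos h2, if_neg (ne_of_lt h2)]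
    · rw [if_neg (by rw [h2]; exact lt_irrefl _), if_pos h2]; linarith
    · rw [if_neg (not_lt_of_gt h2), if_neg (ne_of_gt h2)]; linarith
  · rw [if_neg (by rw [h1]; exact lt_irrefl _), if_pos h1]
    rcases lt_trichotomy a2 b2 with h2 | h2 | h2
    · rw [if_pos h2, if_neg (ne_of_lt h2)]; linarith
    · rw [if_neg (by rw [h2]; exact lt_irrefl _), if_pos h2]
    · rw [if_neg (not_lt_of_gt h2), if_neg (ne_of_gt h2)]; linarith
  · rw [if_neg (not_lt_of_gt h1), if_neg (ne_of_gt h1)]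
    have h0 : (0:ℝ) ≤ (if a2 < b2 then (1:ℝ) else 0) + τ * (if a2 = b2 then (1:ℝ) else 0) := by
      split_ifs <;> linarith
    linarith

theorem conformal_transducer_is_rps (n : ℕ) (α : ℝ → Fin (n + 1) → ℝ)
    (hcont : ∀ i : Fin (n + 1), Continuous fun y => α y i)
    (hmono : ∀ i : Fin n,
      Monotone fun y => α y (Fin.last n) - α y i.castSucc)
    (hbot : ∀ i : Fin n,
      Tendsto (fun y => α y (Fin.last n) - α y i.castSucc) atBot atBot)
    (htop : ∀ i : Fin n,
      Tendsto (fun y => α y (Fin.last n) - α y i.castSucc) atTop atTop)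
    (Q : ℝ → ℝ → ℝ)
    (hQ : Q = fun y τ =>
      (((Finset.univ.filter fun i : Fin (n + 1) => α y i < α y (Fin.last n)).card : ℝ) +
        τ * ((Finset.univ.filter fun i : Fin (n + 1) => α y i = α y (Fin.last n)).card : ℝ)) /
        (n + 1)) :
    (∀ τ ∈ Set.Icc (0 : ℝ) 1, Monotone fun y => Q y τ) ∧
      Tendsto (fun y => Q y 0) atBot (nhds 0) ∧
      Tendsto (fun y => Q y 1) atTop (nhds 1) := by
  subst hQ
  have key : ∀ (y : ℝ) (τ : ℝ),
      ((Finset.univ.filter fun i : Fin (n + 1) => α y i < α y (Fin.last n)).card : ℝ) +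
        τ * ((Finset.univ.filter fun i : Fin (n + 1) => α y i = α y (Fin.last n)).card : ℝ)
      = ∑ i : Fin (n + 1),
          ((if α y i < α y (Fin.last n) then (1:ℝ) else 0) +
            τ * (if α y i = α y (Fin.last n) then (1:ℝ) else 0)) := by
    intro y τ
    rw [Finset.sum_add_distrib, ← Finset.mul_sum, Finset.sum_boole, Finset.sum_boole]
  refine ⟨?_, ?_, ?_⟩
  · rintro τ ⟨hτ0, hτ1⟩ y₁ y₂ hy
    simp only
    gcongr ?_ / _
    rw [key, key]
    apply Finset.sum_le_sum
    intro i _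
    rcases i.eq_castSucc_or_eq_last with ⟨j, rfl⟩ | rfl
    · have h := hmono j hy
      simp only at h
      exact aux_step τ _ _ _ _ hτ0 hτ1 h
    · simp
  · have hev : ∀ᶠ y in atBot, ∀ j : Fin n, α y (Fin.last n) - α y j.castSucc < 0 :=
      eventually_all.2 fun j => (hbot j).eventually (eventually_lt_atBot 0)
    have heq : ∀ᶠ y in atBot,
        (((Finset.univ.filter fun i : Fin (n + 1) => α y i < α y (Fin.last n)).card : ℝ) +
          0 * ((Finset.univ.filter fun i : Fin (n + 1) => α y i = α y (Fin.last n)).card : ℝ)) /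
          (n + 1) = 0 := by
      filter_upwards [hev] with y hy
      have h0 : (Finset.univ.filter fun i : Fin (n + 1) => α y i < α y (Fin.last n)) = ∅ := by
        rw [Finset.filter_eq_empty_iff]
        intro i _
        rcases i.eq_castSucc_or_eq_last with ⟨j, rfl⟩ | rfl
        · have := hy j; intro h; linarith
        · exact lt_irrefl _
      simp [h0]
    rw [tendsto_congr' heq]
    exact tendsto_const_nhds
  · have hev : ∀ᶠ y in atTop, ∀ j : Fin n, 0 < α y (Fin.last n) - α y j.castSucc :=
      eventually_all.2 fun j => (htop j).eventually (eventually_gt_atTop 0)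
    have heq : ∀ᶠ y in atTop,
        (((Finset.univ.filter fun i : Fin (n + 1) => α y i < α y (Fin.last n)).card : ℝ) +
          1 * ((Finset.univ.filter fun i : Fin (n + 1) => α y i = α y (Fin.last n)).card : ℝ)) /
          (n + 1) = 1 := by
      filter_upwards [hev] with y hy
      have h1 : (Finset.univ.filter fun i : Fin (n + 1) => α y i < α y (Fin.last n)) =
          Finset.univ.erase (Fin.last n) := by
        ext i
        simp only [Finset.mem_filter, Finset.mem_erase, Finset.mem_univ, and_true, true_and]
        constructor
        · intro h; rintro rfl; exact lt_irrefl _ h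
        · intro h
          rcases i.eq_castSucc_or_eq_last with ⟨j, rfl⟩ | rfl
          · have := hy j; linarith
          · exact absurd rfl h
      have h2 : (Finset.univ.filter fun i : Fin (n + 1) => α y i = α y (Fin.last n)) =
          {Fin.last n} := by
        ext i
        simp only [Finset.mem_filter, Finset.mem_singleton, Finset.mem_univ, true_and]
        constructor
        · intro h
          rcases i.eq_castSucc_or_eq_last with ⟨j, rfl⟩ | rfl
          · have := hy j; exfalso; linarith
          · rfl
        · rintro rfl; rfl
      rw [h1, h2]
      simp only [Finset.card_erase_of_mem (Finset.mem_univ _), Finset.card_univ,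
        Fintype.card_fin, Finset.card_singleton]
      have hn : ((n:ℝ) + 1) ≠ 0 := by positivity
      field_simp
      norm_num
    rw [tendsto_congr' heq]
    exact tendsto_const_nhds
end

section
/- Let z_1,…,z_{n+1} be exchangeable random variables (e.g., i.i.d. from a probability measure P) taking values in a measurable space Z, let A: Z^{n+1} → ℝ be a measurable function invariant under permutations of its first n arguments, define scores α_i := A(z_1,…,z_{i−1},z_{i+1},…,z_{n+1},z_i) for i ≤ n and α_{n+1} := A(z_1,…,z_{n+1}), and let τ ~ U[0,1] be independent of the z's. Then the random variable (|{i : α_i < α_{n+1}}| + τ|{i : α_i = α_{n+1}}|)/(n+1) is uniformly distributed on [0,1]. -/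
open MeasureTheory ProbabilityTheory

namespace ConformalAux
open Finset


variable {N : ℕ}

/-- number of indices with strictly smaller value -/
noncomputable def cLT (x : Fin N → ℝ) (i : Fin N) : ℕ := (univ.filter fun j => x j < x i).card
/-- number of indices with value ≤ -/
noncomputable def cLE (x : Fin N → ℝ) (i : Fin N) : ℕ := (univ.filter fun j => x j ≤ x i).card
/-- number of indices with equal value -/
noncomputable def cEQ (x : Fin N → ℝ) (i : Fin N) : ℕ := (univ.filter fun j => x j = x i).card

lemma cLE_eq (x : Fin N → ℝ) (i : Fin N) : cLE x i = cLT x i + cEQ x i := by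
  classical
  rw [cLE, cLT, cEQ, ← card_union_of_disjoint, ← filter_or]
  · apply congrArg
    apply filter_congr
    intro j _
    simp [le_iff_lt_or_eq]
  · simp only [disjoint_left, mem_filter, mem_univ, true_and]
    intro j h1 h2
    exact absurd h2 (ne_of_lt h1)

lemma one_le_cEQ (x : Fin N → ℝ) (i : Fin N) : 1 ≤ cEQ x i :=
  card_pos.mpr ⟨i, mem_filter.mpr ⟨mem_univ i, rfl⟩⟩

lemma cLE_le (x : Fin N → ℝ) (i : Fin N) : cLE x i ≤ N :=
  le_trans (card_filter_le _ _) (by simp)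

lemma cLT_congr {x : Fin N → ℝ} {i j : Fin N} (h : x i = x j) : cLT x i = cLT x j := by
  unfold cLT; apply congrArg; apply filter_congr; intro l _; simp [h]

lemma cLE_congr {x : Fin N → ℝ} {i j : Fin N} (h : x i = x j) : cLE x i = cLE x j := by
  unfold cLE; apply congrArg; apply filter_congr; intro l _; simp [h]

lemma cEQ_congr {x : Fin N → ℝ} {i j : Fin N} (h : x i = x j) : cEQ x i = cEQ x j := by
  unfold cEQ; apply congrArg; apply filter_congr; intro l _; simp [h]

lemma clamp_div (c m s : ℝ) (hc : 0 ≤ c) (hm : 1 ≤ m) :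
    min (max ((s - c) / m) 0) 1 = (min (max s 0) (c + m) - min (max s 0) c) / m := by
  have hm0 : (0:ℝ) < m := lt_of_lt_of_le one_pos hm
  rw [eq_div_iff hm0.ne']
  rcases le_total s c with h1 | h1
  · have h2 : max s 0 ≤ c := max_le h1 hc
    rw [min_eq_left (h2.trans (by linarith)), min_eq_left h2]
    have h3 : (s - c) / m ≤ 0 := div_nonpos_of_nonpos_of_nonneg (by linarith) hm0.le
    rw [max_eq_right h3, min_eq_left (by norm_num : (0:ℝ) ≤ 1)]
    ring
  · have hs0 : max s 0 = s := max_eq_left (le_trans hc h1)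
    rw [hs0]
    rcases le_total s (c + m) with h2 | h2
    · rw [min_eq_left h2, min_eq_right h1]
      have h3 : 0 ≤ (s - c) / m := div_nonneg (by linarith) hm0.le
      rw [max_eq_left h3, min_eq_left (by rw [div_le_one hm0]; linarith)]
      field_simp
    · rw [min_eq_right h2, min_eq_right h1]
      rw [max_eq_left (div_nonneg (by linarith) hm0.le),
        min_eq_right (by rw [le_div_iff₀ hm0]; linarith)]
      ring

lemma exists_rank (x : Fin N → ℝ) {k : ℕ} (hk : k < N) :
    ∃ i, cLT x i ≤ k ∧ k < cLE x i := by
  classical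
  have hN : 0 < N := Nat.pos_of_ne_zero (by omega)
  set T := univ.filter fun i => cLT x i ≤ k with hT
  have hTne : T.Nonempty := by
    obtain ⟨i0, _, hi0⟩ := Finset.exists_min_image univ x ⟨⟨0, hN⟩, mem_univ _⟩
    refine ⟨i0, mem_filter.mpr ⟨mem_univ _, ?_⟩⟩
    have he : (univ.filter fun j => x j < x i0) = ∅ := by
      refine filter_eq_empty_iff.mpr ?_
      intro j _
      exact not_lt.mpr (hi0 j (mem_univ _))
    show (univ.filter fun j => x j < x i0).card ≤ k
    rw [he]
    simp
  obtain ⟨i, hiT, hmax⟩ := Finset.exists_max_image T x hTne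
  refine ⟨i, (mem_filter.mp hiT).2, ?_⟩
  by_contra hle
  push_neg at hle
  have hne : (univ.filter fun l => x i < x l).Nonempty := by
    by_contra hempty
    rw [not_nonempty_iff_eq_empty, filter_eq_empty_iff] at hempty
    have huniv : (univ.filter fun j => x j ≤ x i) = univ := by
      apply filter_true_of_mem
      intro j _
      exact not_lt.mp (hempty (mem_univ j))
    have : cLE x i = N := by rw [cLE, huniv, card_univ, Fintype.card_fin]
    omega
  obtain ⟨l, hlmem, hlmin⟩ := Finset.exists_min_image _ x hne
  have hxl : x i < x l := (mem_filter.mp hlmem).2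
  have hcl : cLT x l = cLE x i := by
    rw [cLT, cLE]
    apply congrArg
    apply filter_congr
    intro j _
    constructor
    · intro hj
      by_contra hji
      push_neg at hji
      exact absurd hj (not_lt.mpr (hlmin j (mem_filter.mpr ⟨mem_univ _, hji⟩)))
    · intro hj
      exact lt_of_le_of_lt hj hxl
  have hlT : l ∈ T := mem_filter.mpr ⟨mem_univ _, by omega⟩
  exact absurd hxl (not_lt.mpr (hmax l hlT))

lemma eq_of_rank (x : Fin N → ℝ) {i j : Fin N} {k : ℕ}
    (hi : cLT x i ≤ k ∧ k < cLE x i) (hj : cLT x j ≤ k ∧ k < cLE x j) : x i = x j := by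
  by_contra h
  have key : ∀ a b : Fin N, x a < x b → cLE x a ≤ cLT x b := by
    intro a b hab
    apply card_le_card
    intro l hl
    simp only [mem_filter, mem_univ, true_and] at hl ⊢
    exact lt_of_le_of_lt hl hab
  rcases lt_or_gt_of_ne h with hlt | hlt
  · have := key i j hlt; omega
  · have := key j i hlt; omega

lemma sum_inv_cEQ (x : Fin N → ℝ) {k : ℕ} (hk : k < N) (d : ℝ) :
    (∑ i, if cLT x i ≤ k ∧ k < cLE x i then d / (cEQ x i : ℝ) else 0) = d := by
  classical
  rw [← Finset.sum_filter]
  obtain ⟨i0, hi0⟩ := exists_rank x hk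
  set S := univ.filter fun i => cLT x i ≤ k ∧ k < cLE x i with hS
  have hSval : ∀ j ∈ S, x j = x i0 := fun j hj => eq_of_rank x (mem_filter.mp hj).2 hi0
  have hSeq : S = univ.filter fun j => x j = x i0 := by
    apply Finset.Subset.antisymm
    · intro j hj
      exact mem_filter.mpr ⟨mem_univ _, hSval j hj⟩
    · intro j hj
      have hxj : x j = x i0 := (mem_filter.mp hj).2
      refine mem_filter.mpr ⟨mem_univ _, ?_⟩
      rw [cLT_congr hxj, cLE_congr hxj]
      exact hi0
  have hcard : S.card = cEQ x i0 := by rw [hSeq]; rfl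
  have hm : (1:ℕ) ≤ cEQ x i0 := one_le_cEQ x i0
  have hm0 : (cEQ x i0 : ℝ) ≠ 0 := by exact_mod_cast Nat.one_le_iff_ne_zero.mp hm
  calc (∑ j ∈ S, d / (cEQ x j : ℝ)) = ∑ j ∈ S, d / (cEQ x i0 : ℝ) :=
        Finset.sum_congr rfl fun j hj => by rw [cEQ_congr (hSval j hj)]
    _ = S.card * (d / (cEQ x i0 : ℝ)) := by rw [Finset.sum_const, nsmul_eq_mul]
    _ = d := by rw [hcard]; field_simp

lemma telesc (H : ℕ → ℝ) {a b : ℕ} (hab : a ≤ b) :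
    ∑ k ∈ Ico a b, (H (k + 1) - H k) = H b - H a := by
  rw [Finset.sum_Ico_eq_sub _ hab, Finset.sum_range_sub, Finset.sum_range_sub]; ring

theorem sum_clamp (x : Fin N → ℝ) (s : ℝ) :
    (∑ i, min (max ((s - (cLT x i : ℝ)) / (cEQ x i : ℝ)) 0) 1) = min (max s 0) (N : ℝ) := by
  classical
  set H : ℕ → ℝ := fun k => min (max s 0) (k : ℝ) with hH
  have hH0 : H 0 = 0 := by simp [hH]
  have h1 : ∀ i : Fin N, min (max ((s - (cLT x i : ℝ)) / (cEQ x i : ℝ)) 0) 1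
      = ∑ k ∈ Ico (cLT x i) (cLE x i), (H (k + 1) - H k) / (cEQ x i : ℝ) := by
    intro i
    have hm : (1:ℝ) ≤ (cEQ x i : ℝ) := by exact_mod_cast one_le_cEQ x i
    rw [clamp_div _ _ _ (Nat.cast_nonneg _) hm, ← Finset.sum_div]
    congr 1
    rw [telesc H (by rw [cLE_eq]; omega)]
    have : ((cLE x i : ℕ) : ℝ) = (cLT x i : ℝ) + (cEQ x i : ℝ) := by
      rw [cLE_eq]; push_cast; ring
    simp only [hH, this]
  calc (∑ i, min (max ((s - (cLT x i : ℝ)) / (cEQ x i : ℝ)) 0) 1)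
      = ∑ i, ∑ k ∈ Ico (cLT x i) (cLE x i), (H (k + 1) - H k) / (cEQ x i : ℝ) :=
        Finset.sum_congr rfl fun i _ => h1 i
    _ = ∑ i, ∑ k ∈ range N, if k ∈ Ico (cLT x i) (cLE x i)
          then (H (k + 1) - H k) / (cEQ x i : ℝ) else 0 := by
        refine Finset.sum_congr rfl fun i _ => ?_
        rw [Finset.sum_ite_mem, Finset.inter_eq_right.mpr]
        intro k hkmem
        rw [mem_Ico] at hkmem
        exact mem_range.mpr (lt_of_lt_of_le hkmem.2 (cLE_le x i))
    _ = ∑ k ∈ range N, ∑ i, if k ∈ Ico (cLT x i) (cLE x i)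
          then (H (k + 1) - H k) / (cEQ x i : ℝ) else 0 := Finset.sum_comm
    _ = ∑ k ∈ range N, (H (k + 1) - H k) := by
        refine Finset.sum_congr rfl fun k hk => ?_
        have hkN := mem_range.mp hk
        have := sum_inv_cEQ x hkN (H (k + 1) - H k)
        simpa only [mem_Ico] using this
    _ = min (max s 0) (N : ℝ) := by rw [Finset.sum_range_sub, hH0, sub_zero]




lemma meas_cLT (i : Fin N) : Measurable fun x : Fin N → ℝ => (cLT x i : ℝ) := by
  have h : ∀ x : Fin N → ℝ, (cLT x i : ℝ) = ∑ j, if x j < x i then (1:ℝ) else 0 := by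
    intro x
    rw [cLT, Finset.card_filter]
    push_cast
    rfl
  simp_rw [h]
  exact Finset.measurable_sum _ fun j _ => Measurable.ite
    (measurableSet_lt (measurable_pi_apply j) (measurable_pi_apply i))
    measurable_const measurable_const

lemma meas_cEQ (i : Fin N) : Measurable fun x : Fin N → ℝ => (cEQ x i : ℝ) := by
  have h : ∀ x : Fin N → ℝ, (cEQ x i : ℝ) = ∑ j, if x j = x i then (1:ℝ) else 0 := by
    intro x
    rw [cEQ, Finset.card_filter]
    push_cast
    rfl
  simp_rw [h]
  exact Finset.measurable_sum _ fun j _ => Measurable.ite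
    (measurableSet_eq_fun (measurable_pi_apply j) (measurable_pi_apply i))
    measurable_const measurable_const

lemma cLT_comp (x : Fin N → ℝ) (σ : Equiv.Perm (Fin N)) (i : Fin N) :
    cLT (x ∘ ⇑σ) i = cLT x (σ i) := by
  rw [cLT, cLT, Finset.card_filter, Finset.card_filter]
  exact Equiv.sum_comp σ fun l => if x l < x (σ i) then 1 else 0

lemma cEQ_comp (x : Fin N → ℝ) (σ : Equiv.Perm (Fin N)) (i : Fin N) :
    cEQ (x ∘ ⇑σ) i = cEQ x (σ i) := by
  rw [cEQ, cEQ, Finset.card_filter, Finset.card_filter]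
  exact Equiv.sum_comp σ fun l => if x l = x (σ i) then 1 else 0


end ConformalAux

open Finset ConformalAux

theorem conformal_transducer_validity (n : ℕ)
    {Z : Type*} [MeasurableSpace Z]
    (P : Measure Z) [IsProbabilityMeasure P]
    {Ω : Type*} [MeasurableSpace Ω] (μ : Measure Ω) [IsProbabilityMeasure μ]
    (z : Fin (n + 1) → Ω → Z)
    (hzmeas : ∀ i, Measurable (z i))
    (hzindep : iIndepFun z μ)
    (hzlaw : ∀ i, Measure.map (z i) μ = P)
    (A : (Fin (n + 1) → Z) → ℝ) (hA : Measurable A)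
    (hAinv : ∀ σ : Equiv.Perm (Fin (n + 1)), σ (Fin.last n) = Fin.last n →
      ∀ w : Fin (n + 1) → Z, A (w ∘ σ) = A w)
    (α : Fin (n + 1) → Ω → ℝ)
    (hα : α = fun i ω => A fun j => z (Equiv.swap i (Fin.last n) j) ω)
    (τ : Ω → ℝ) (hτmeas : Measurable τ)
    (hτlaw : Measure.map τ μ = volume.restrict (Set.Icc (0 : ℝ) 1))
    (hτindep : IndepFun τ (fun ω i => z i ω) μ) :
    Measure.map (fun ω =>
        (((Finset.univ.filter fun i : Fin (n + 1) =>
              α i ω < α (Fin.last n) ω).card : ℝ) +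
          τ ω * ((Finset.univ.filter fun i : Fin (n + 1) =>
              α i ω = α (Fin.last n) ω).card : ℝ)) / (n + 1)) μ
      = volume.restrict (Set.Icc (0 : ℝ) 1) := by
  subst hα
  set lastI := Fin.last n with hlastI
  set Zf : Ω → (Fin (n + 1) → Z) := fun ω i => z i ω with hZf
  have hZmeas : Measurable Zf := measurable_pi_lambda _ hzmeas
  -- law of any permuted observation vector is the product measure
  have hmap_pi : ∀ σ : Equiv.Perm (Fin (n + 1)),
      Measure.map (fun ω i => z (σ i) ω) μ = Measure.pi (fun _ => P) := by
    intro σ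
    refine (Measure.pi_eq fun s hs => ?_).symm
    rw [Measure.map_apply (measurable_pi_lambda _ fun i => hzmeas (σ i))
      (MeasurableSet.univ_pi hs)]
    have hpre : (fun ω i => z (σ i) ω) ⁻¹' Set.univ.pi s = ⋂ i, z (σ i) ⁻¹' s i := by
      ext ω
      simp [Set.mem_pi]
    rw [hpre]
    have hre : (⋂ i, z (σ i) ⁻¹' s i) = ⋂ i, z i ⁻¹' s (σ.symm i) := by
      ext ω
      simp only [Set.mem_iInter, Set.mem_preimage]
      constructor
      · intro h i
        have := h (σ.symm i)
        rwa [Equiv.apply_symm_apply] at this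
      · intro h i
        have := h (σ i)
        rwa [Equiv.symm_apply_apply] at this
    rw [hre]
    calc μ (⋂ i, z i ⁻¹' s (σ.symm i))
        = μ (⋂ i ∈ Finset.univ, z i ⁻¹' s (σ.symm i)) := by simp
      _ = ∏ i, μ (z i ⁻¹' s (σ.symm i)) :=
          hzindep.measure_inter_preimage_eq_mul Finset.univ fun i _ => hs _
      _ = ∏ i, P (s (σ.symm i)) := by
          refine Finset.prod_congr rfl fun i _ => ?_
          rw [← hzlaw i, Measure.map_apply (hzmeas i) (hs _)]
      _ = ∏ i, P (s i) := Equiv.prod_comp σ.symm fun i => P (s i)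
  have hZpi : Measure.map Zf μ = Measure.pi (fun _ => P) := hmap_pi (Equiv.refl _)
  have hcomp_meas : ∀ σ : Equiv.Perm (Fin (n + 1)),
      Measurable fun w : Fin (n + 1) → Z => w ∘ ⇑σ :=
    fun σ => measurable_pi_lambda _ fun i => measurable_pi_apply _
  have hexch : ∀ σ : Equiv.Perm (Fin (n + 1)),
      Measure.map (fun w : Fin (n + 1) → Z => w ∘ ⇑σ) (Measure.map Zf μ)
        = Measure.map Zf μ := by
    intro σ
    rw [Measure.map_map (hcomp_meas σ) hZmeas]
    have h1 : ((fun w : Fin (n + 1) → Z => w ∘ ⇑σ) ∘ Zf) = fun ω i => z (σ i) ω := rfl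
    rw [h1, hmap_pi σ, hZpi]
  -- score map and its equivariance
  set S : (Fin (n + 1) → Z) → (Fin (n + 1) → ℝ) :=
    fun w i => A fun j => w (Equiv.swap i lastI j) with hS
  have hSmeas : Measurable S :=
    measurable_pi_lambda _ fun i => hA.comp (measurable_pi_lambda _ fun j =>
      measurable_pi_apply _)
  have hSequiv : ∀ (σ : Equiv.Perm (Fin (n + 1))) (w : Fin (n + 1) → Z),
      S (w ∘ ⇑σ) = S w ∘ ⇑σ := by
    intro σ w
    funext i
    show A (fun j => w (σ (Equiv.swap i lastI j))) = A fun j => w (Equiv.swap (σ i) lastI j)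
    set ρ : Equiv.Perm (Fin (n + 1)) :=
      ((Equiv.swap i lastI).trans σ).trans (Equiv.swap (σ i) lastI) with hρ
    have hρlast : ρ lastI = lastI := by
      simp [hρ, Equiv.trans_apply, Equiv.swap_apply_right]
    have key := hAinv ρ hρlast (w ∘ ⇑(Equiv.swap (σ i) lastI))
    have harg : (w ∘ ⇑(Equiv.swap (σ i) lastI)) ∘ ⇑ρ
        = fun j => w (σ (Equiv.swap i lastI j)) := by
      funext j
      simp [hρ, Equiv.trans_apply, Function.comp, Equiv.swap_apply_self]
    rw [harg] at key
    exact key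
  -- law of the score vector and its exchangeability
  set Λ : Measure (Fin (n + 1) → ℝ) := Measure.map S (Measure.map Zf μ) with hΛ
  haveI : IsProbabilityMeasure (Measure.map Zf μ) :=
    Measure.isProbabilityMeasure_map hZmeas.aemeasurable
  haveI : IsProbabilityMeasure Λ := Measure.isProbabilityMeasure_map hSmeas.aemeasurable
  have hΛexch : ∀ σ : Equiv.Perm (Fin (n + 1)),
      Measure.map (fun x : Fin (n + 1) → ℝ => x ∘ ⇑σ) Λ = Λ := by
    intro σ
    have hcompR : Measurable fun x : Fin (n + 1) → ℝ => x ∘ ⇑σ :=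
      measurable_pi_lambda _ fun i => measurable_pi_apply _
    rw [hΛ, Measure.map_map hcompR hSmeas]
    have h1 : ((fun x : Fin (n + 1) → ℝ => x ∘ ⇑σ) ∘ S)
        = S ∘ fun w : Fin (n + 1) → Z => w ∘ ⇑σ := by
      funext w
      exact (hSequiv σ w).symm
    rw [h1, ← Measure.map_map hSmeas (hcomp_meas σ), hexch σ]
  -- independence : joint law is a product measure
  have hpairmeas : Measurable fun ω => (Zf ω, τ ω) := hZmeas.prodMk hτmeas
  have hτZ : Measure.map (fun ω => (Zf ω, τ ω)) μ
      = (Measure.map Zf μ).prod (Measure.map τ μ) :=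
    (indepFun_iff_map_prod_eq_prod_map_map hZmeas.aemeasurable hτmeas.aemeasurable).mp
      hτindep.symm
  -- the p-value as a function on the product space
  set g : ((Fin (n + 1) → Z) × ℝ) → ℝ := fun p =>
    (((cLT (S p.1) lastI : ℝ)) + p.2 * ((cEQ (S p.1) lastI : ℝ))) / ((n : ℝ) + 1) with hg
  have hgmeas : Measurable g := by
    apply Measurable.div_const
    exact ((meas_cLT lastI).comp (hSmeas.comp measurable_fst)).add
      (measurable_snd.mul ((meas_cEQ lastI).comp (hSmeas.comp measurable_fst)))
  show Measure.map (fun ω => g (Zf ω, τ ω)) μ = volume.restrict (Set.Icc (0 : ℝ) 1)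
  have hmap1 : Measure.map (fun ω => g (Zf ω, τ ω)) μ
      = Measure.map g ((Measure.map Zf μ).prod (Measure.map τ μ)) := by
    rw [← hτZ, Measure.map_map hgmeas hpairmeas]
    rfl
  rw [hmap1, hτlaw]
  haveI : IsProbabilityMeasure (volume.restrict (Set.Icc (0:ℝ) 1)) := by
    constructor
    rw [Measure.restrict_apply_univ, Real.volume_Icc]
    norm_num
  haveI : IsProbabilityMeasure
      ((Measure.map Zf μ).prod (volume.restrict (Set.Icc (0:ℝ) 1))) := by
    infer_instance
  haveI : IsProbabilityMeasure
      (Measure.map g ((Measure.map Zf μ).prod (volume.restrict (Set.Icc (0:ℝ) 1)))) :=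
    Measure.isProbabilityMeasure_map hgmeas.aemeasurable
  -- the Iic values of the restricted Lebesgue measure
  have hres : ∀ r : ℝ, (volume.restrict (Set.Icc (0:ℝ) 1)) (Set.Iic r)
      = ENNReal.ofReal (min (max r 0) 1) := by
    intro r
    rw [Measure.restrict_apply measurableSet_Iic]
    have hseteq : Set.Iic r ∩ Set.Icc 0 1 = Set.Icc 0 (min r 1) := by
      ext t
      simp only [Set.mem_inter_iff, Set.mem_Iic, Set.mem_Icc, le_min_iff]
      constructor
      · rintro ⟨h1, h2, h3⟩
        exact ⟨h2, h1, h3⟩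
      · rintro ⟨h2, h1, h3⟩
        exact ⟨h1, h2, h3⟩
    rw [hseteq, Real.volume_Icc]
    rcases le_total r 0 with h | h
    · have h1 : min r 1 = r := min_eq_left (le_trans h zero_le_one)
      have h2 : max r 0 = 0 := max_eq_right h
      rw [h1, h2, sub_zero]
      simp [ENNReal.ofReal_eq_zero.mpr h]
    · rw [max_eq_left h, sub_zero]
  refine Measure.ext_of_Iic _ _ fun u => ?_
  rw [hres u]
  rw [Measure.map_apply hgmeas measurableSet_Iic,
    Measure.prod_apply (hgmeas measurableSet_Iic)]
  set s : ℝ := ((n : ℝ) + 1) * u with hs_def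
  have hnpos : (0:ℝ) < (n : ℝ) + 1 := by positivity
  have hEQpos : ∀ (x : Fin (n + 1) → ℝ) (i : Fin (n + 1)), (0:ℝ) < (cEQ x i : ℝ) := by
    intro x i
    have := one_le_cEQ x i
    exact_mod_cast lt_of_lt_of_le Nat.zero_lt_one (by exact_mod_cast this)
  have hsec : ∀ w : Fin (n + 1) → Z, Prod.mk w ⁻¹' (g ⁻¹' Set.Iic u)
      = Set.Iic ((s - (cLT (S w) lastI : ℝ)) / (cEQ (S w) lastI : ℝ)) := by
    intro w
    ext t
    simp only [Set.mem_preimage, Set.mem_Iic, hg]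
    rw [div_le_iff₀ hnpos, le_div_iff₀ (hEQpos (S w) lastI)]
    constructor <;> intro h <;> [nlinarith [h]; nlinarith [h]]
  set Fi : Fin (n + 1) → (Fin (n + 1) → ℝ) → ENNReal := fun i x =>
    ENNReal.ofReal (min (max ((s - (cLT x i : ℝ)) / (cEQ x i : ℝ)) 0) 1) with hFi
  have hFimeas : ∀ i, Measurable (Fi i) := fun i =>
    ENNReal.measurable_ofReal.comp
      ((((measurable_const.sub (meas_cLT i)).div (meas_cEQ i)).max
        measurable_const).min measurable_const)
  have hstep1 : (∫⁻ w, (volume.restrict (Set.Icc (0:ℝ) 1))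
        (Prod.mk w ⁻¹' (g ⁻¹' Set.Iic u)) ∂(Measure.map Zf μ))
      = ∫⁻ x, Fi lastI x ∂Λ := by
    rw [hΛ, lintegral_map (hFimeas lastI) hSmeas]
    refine lintegral_congr fun w => ?_
    rw [hsec w, hres _]
  rw [hstep1]
  -- exchangeability : all coordinates give the same integral
  have hIi : ∀ i : Fin (n + 1), ∫⁻ x, Fi lastI x ∂Λ = ∫⁻ x, Fi i x ∂Λ := by
    intro i
    conv_lhs => rw [← hΛexch (Equiv.swap i lastI)]
    rw [lintegral_map (hFimeas lastI) (measurable_pi_lambda _ fun j => measurable_pi_apply _)]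
    refine lintegral_congr fun x => ?_
    show Fi lastI (x ∘ ⇑(Equiv.swap i lastI)) = Fi i x
    simp only [hFi]
    rw [cLT_comp, cEQ_comp, Equiv.swap_apply_right]
  -- summing over coordinates
  have hcard : (Finset.univ : Finset (Fin (n + 1))).card = n + 1 := by
    rw [card_univ, Fintype.card_fin]
  have hptwise : ∀ x : Fin (n + 1) → ℝ,
      (∑ i, Fi i x) = ENNReal.ofReal (min (max s 0) ((n : ℝ) + 1)) := by
    intro x
    simp only [hFi]
    rw [← ENNReal.ofReal_sum_of_nonneg (fun i _ => le_min (le_max_right _ _) zero_le_one)]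
    congr 1
    rw [sum_clamp x s]
    push_cast
    ring_nf
  have hkey : ((n + 1 : ℕ) : ENNReal) * ∫⁻ x, Fi lastI x ∂Λ
      = ENNReal.ofReal (min (max s 0) ((n : ℝ) + 1)) := by
    calc ((n + 1 : ℕ) : ENNReal) * ∫⁻ x, Fi lastI x ∂Λ
        = ∑ _i : Fin (n + 1), ∫⁻ x, Fi lastI x ∂Λ := by
          rw [Finset.sum_const, hcard, nsmul_eq_mul]
      _ = ∑ i : Fin (n + 1), ∫⁻ x, Fi i x ∂Λ :=
          Finset.sum_congr rfl fun i _ => hIi i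
      _ = ∫⁻ x, ∑ i, Fi i x ∂Λ := (lintegral_finset_sum _ fun i _ => hFimeas i).symm
      _ = ∫⁻ _x, ENNReal.ofReal (min (max s 0) ((n : ℝ) + 1)) ∂Λ :=
          lintegral_congr fun x => hptwise x
      _ = ENNReal.ofReal (min (max s 0) ((n : ℝ) + 1)) := by
          rw [lintegral_const, measure_univ, mul_one]
  have hfactor : min (max s 0) ((n : ℝ) + 1) = ((n : ℝ) + 1) * min (max u 0) 1 := by
    rcases le_total u 0 with h | h
    · have h1 : max u 0 = 0 := max_eq_right h
      have h2 : max s 0 = 0 := max_eq_right (by rw [hs_def]; nlinarith)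
      rw [h1, h2, min_eq_left hnpos.le, min_eq_left zero_le_one, mul_zero]
    · have h1 : max u 0 = u := max_eq_left h
      have h2 : max s 0 = s := max_eq_left (by rw [hs_def]; nlinarith)
      rw [h1, h2]
      rcases le_total u 1 with h3 | h3
      · rw [min_eq_left (by rw [hs_def]; nlinarith), min_eq_left h3, hs_def]
      · rw [min_eq_right (by rw [hs_def]; nlinarith), min_eq_right h3, mul_one]
  have hcast2 : ENNReal.ofReal ((n : ℝ) + 1) = ((n + 1 : ℕ) : ENNReal) := by
    rw [show ((n : ℝ) + 1) = ((n + 1 : ℕ) : ℝ) by push_cast; ring, ENNReal.ofReal_natCast]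
  rw [hfactor, ENNReal.ofReal_mul hnpos.le, hcast2] at hkey
  exact (ENNReal.mul_right_inj
    (by exact_mod_cast Nat.succ_ne_zero n) (ENNReal.natCast_ne_top _)).mp hkey
end
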